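/- Suppose f: M → M is a map of a metric space and there is a sequence of natural numbers q_n → ∞ such that the iterates f^{q_n} converge uniformly to the identity. If additionally the derivative cocycle satisfies ‖D_x f^{q_n}‖ → 1 and ‖D_x f^{-q_n}‖ → 1 uniformly in x (say M compact, f a C^1 diffeomorphism with f^{q_n} → Id in C^1), then all Lyapunov exponents of f at every point x are zero, i.e., limsup_{n→∞} (1/n) log ‖D_x f^n v‖ = 0 for every nonzero tangent vector v. -/

import Mathlib

open Filter

variable {M : Type*} {d : ℕ}

/-- The derivative cocycle over `f`: `coc f A n x = A(f^{n-1} x) ⋯ A(x)`. -/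
noncomputable def coc (f : M → M)
    (A : M → (EuclideanSpace ℝ (Fin d) →L[ℝ] EuclideanSpace ℝ (Fin d))) :
    ℕ → M → (EuclideanSpace ℝ (Fin d) →L[ℝ] EuclideanSpace ℝ (Fin d))
  | 0, _ => 1
  | n + 1, x => A (f^[n] x) ∘L coc f A n x

noncomputable def icoc (f : M → M)
    (B : M → (EuclideanSpace ℝ (Fin d) →L[ℝ] EuclideanSpace ℝ (Fin d))) :
    ℕ → M → (EuclideanSpace ℝ (Fin d) →L[ℝ] EuclideanSpace ℝ (Fin d))
  | 0, _ => 1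
  | n + 1, x => icoc f B n x ∘L B (f^[n] x)

lemma coc_add (f : M → M)
    (A : M → (EuclideanSpace ℝ (Fin d) →L[ℝ] EuclideanSpace ℝ (Fin d)))
    (m n : ℕ) (x : M) :
    coc f A (m + n) x = coc f A m (f^[n] x) ∘L coc f A n x := by
  induction m with
  | zero =>
    simp only [Nat.zero_add, coc, ContinuousLinearMap.one_def, ContinuousLinearMap.id_comp]
  | succ m ih =>
    have h : m + 1 + n = (m + n) + 1 := by omega
    rw [h]
    show A (f^[m+n] x) ∘L coc f A (m+n) x = _
    rw [ih, Function.iterate_add_apply]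
    rfl

lemma icoc_coc (f : M → M)
    (A B : M → (EuclideanSpace ℝ (Fin d) →L[ℝ] EuclideanSpace ℝ (Fin d)))
    (hinv : ∀ x, B x ∘L A x = 1) (n : ℕ) (x : M) :
    icoc f B n x ∘L coc f A n x = 1 := by
  induction n with
  | zero =>
    show (1 : EuclideanSpace ℝ (Fin d) →L[ℝ] EuclideanSpace ℝ (Fin d)) ∘L 1 = 1
    rw [ContinuousLinearMap.one_def, ContinuousLinearMap.id_comp]
  | succ n ih =>
    show (icoc f B n x ∘L B (f^[n] x)) ∘L (A (f^[n] x) ∘L coc f A n x) = 1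
    rw [ContinuousLinearMap.comp_assoc, ← ContinuousLinearMap.comp_assoc (B (f^[n] x)),
      hinv, ContinuousLinearMap.one_def, ContinuousLinearMap.id_comp, ih]
    rfl

lemma coc_norm_le (f : M → M)
    (A : M → (EuclideanSpace ℝ (Fin d) →L[ℝ] EuclideanSpace ℝ (Fin d)))
    (C : ℝ) (hC : ∀ x, ‖A x‖ ≤ C) (n : ℕ) (x : M) :
    ‖coc f A n x‖ ≤ C ^ n := by
  induction n with
  | zero =>
    rw [pow_zero]
    show ‖(1 : EuclideanSpace ℝ (Fin d) →L[ℝ] EuclideanSpace ℝ (Fin d))‖ ≤ 1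
    rw [ContinuousLinearMap.one_def]
    exact ContinuousLinearMap.norm_id_le
  | succ n ih =>
    have hC0 : (0:ℝ) ≤ C := (norm_nonneg _).trans (hC x)
    calc ‖coc f A (n+1) x‖ ≤ ‖A (f^[n] x)‖ * ‖coc f A n x‖ :=
          ContinuousLinearMap.opNorm_comp_le _ _
    _ ≤ C * C ^ n := by
        exact mul_le_mul (hC _) ih (norm_nonneg _) hC0
    _ = C ^ (n+1) := by ring

lemma icoc_norm_le (f : M → M)
    (B : M → (EuclideanSpace ℝ (Fin d) →L[ℝ] EuclideanSpace ℝ (Fin d)))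
    (C : ℝ) (hC : ∀ x, ‖B x‖ ≤ C) (n : ℕ) (x : M) :
    ‖icoc f B n x‖ ≤ C ^ n := by
  induction n with
  | zero =>
    rw [pow_zero]
    show ‖(1 : EuclideanSpace ℝ (Fin d) →L[ℝ] EuclideanSpace ℝ (Fin d))‖ ≤ 1
    rw [ContinuousLinearMap.one_def]
    exact ContinuousLinearMap.norm_id_le
  | succ n ih =>
    have hC0 : (0:ℝ) ≤ C := (norm_nonneg _).trans (hC x)
    calc ‖icoc f B (n+1) x‖ ≤ ‖icoc f B n x‖ * ‖B (f^[n] x)‖ :=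
          ContinuousLinearMap.opNorm_comp_le _ _
    _ ≤ C ^ n * C := by
        apply mul_le_mul ih (hC _) (norm_nonneg _) (pow_nonneg hC0 n)
    _ = C ^ (n+1) := by ring

lemma block_bounds (f : M → M)
    (A : M → (EuclideanSpace ℝ (Fin d) →L[ℝ] EuclideanSpace ℝ (Fin d)))
    (Q : ℕ) (hQ : ∀ y, ‖coc f A Q y - 1‖ ≤ 1/2) (y : M)
    (w : EuclideanSpace ℝ (Fin d)) :
    1/2 * ‖w‖ ≤ ‖coc f A Q y w‖ ∧ ‖coc f A Q y w‖ ≤ 3/2 * ‖w‖ := by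
  have key : ‖coc f A Q y w - w‖ ≤ 1/2 * ‖w‖ := by
    have h1 : coc f A Q y w - w = (coc f A Q y - 1) w := by
      simp [ContinuousLinearMap.sub_apply]
    rw [h1]
    calc ‖(coc f A Q y - 1) w‖ ≤ ‖coc f A Q y - 1‖ * ‖w‖ :=
          ContinuousLinearMap.le_opNorm _ _
    _ ≤ 1/2 * ‖w‖ := mul_le_mul_of_nonneg_right (hQ y) (norm_nonneg _)
  constructor
  · have h2 : ‖w‖ - ‖coc f A Q y w‖ ≤ ‖coc f A Q y w - w‖ := by
      have := norm_sub_norm_le (w) (coc f A Q y w)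
      have h3 : ‖w - coc f A Q y w‖ = ‖coc f A Q y w - w‖ := norm_sub_rev _ _
      linarith
    linarith
  · have h2 : ‖coc f A Q y w‖ - ‖w‖ ≤ ‖coc f A Q y w - w‖ := norm_sub_norm_le _ _
    linarith

lemma multiblock (f : M → M)
    (A : M → (EuclideanSpace ℝ (Fin d) →L[ℝ] EuclideanSpace ℝ (Fin d)))
    (Q : ℕ) (hQ : ∀ y, ‖coc f A Q y - 1‖ ≤ 1/2) (k : ℕ) (x : M)
    (v : EuclideanSpace ℝ (Fin d)) :
    (1/2)^k * ‖v‖ ≤ ‖coc f A (Q * k) x v‖ ∧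
      ‖coc f A (Q * k) x v‖ ≤ (3/2)^k * ‖v‖ := by
  induction k with
  | zero => simp [coc]
  | succ k ih =>
    have hsplit : coc f A (Q * (k+1)) x = coc f A Q (f^[Q * k] x) ∘L coc f A (Q * k) x := by
      have h : Q * (k + 1) = Q + Q * k := by ring
      rw [h, coc_add]
    set w := coc f A (Q * k) x v with hw
    have happ : coc f A (Q * (k+1)) x v = coc f A Q (f^[Q * k] x) w := by
      rw [hsplit]; rfl
    obtain ⟨hb1, hb2⟩ := block_bounds f A Q hQ (f^[Q * k] x) w
    constructor
    · rw [happ]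
      calc (1/2)^(k+1) * ‖v‖ = 1/2 * ((1/2)^k * ‖v‖) := by ring
      _ ≤ 1/2 * ‖w‖ := by linarith [ih.1]
      _ ≤ ‖coc f A Q (f^[Q * k] x) w‖ := hb1
    · rw [happ]
      calc ‖coc f A Q (f^[Q * k] x) w‖ ≤ 3/2 * ‖w‖ := hb2
      _ ≤ 3/2 * ((3/2)^k * ‖v‖) := by linarith [ih.2]
      _ = (3/2)^(k+1) * ‖v‖ := by ring

lemma full_bounds (f : M → M)
    (A B : M → (EuclideanSpace ℝ (Fin d) →L[ℝ] EuclideanSpace ℝ (Fin d)))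
    (hinv : ∀ x, B x ∘L A x = 1)
    (C' : ℝ) (hC'1 : (1:ℝ) ≤ C')
    (hA : ∀ y, ‖A y‖ ≤ C') (hB : ∀ y, ‖B y‖ ≤ C')
    (Q : ℕ) (hQ1 : 1 ≤ Q) (hQ : ∀ y, ‖coc f A Q y - 1‖ ≤ 1/2)
    (m : ℕ) (x : M) (v : EuclideanSpace ℝ (Fin d)) :
    (1/2)^(m / Q) * ‖v‖ / C' ^ Q ≤ ‖coc f A m x v‖ ∧
      ‖coc f A m x v‖ ≤ C' ^ Q * ((3/2)^(m / Q) * ‖v‖) := by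
  have hC'0 : (0:ℝ) < C' := lt_of_lt_of_le one_pos hC'1
  set k := m / Q with hk
  set r := m % Q with hr
  have hm : m = r + Q * k := by
    rw [hk, hr]; exact (Nat.mod_add_div m Q).symm
  have hsplit : coc f A m x = coc f A r (f^[Q * k] x) ∘L coc f A (Q * k) x := by
    conv_lhs => rw [hm]
    exact coc_add f A r (Q * k) x
  set y := f^[Q * k] x with hy
  set w := coc f A (Q * k) x v with hw
  have happ : coc f A m x v = coc f A r y w := by rw [hsplit]; rfl
  obtain ⟨hm1, hm2⟩ := multiblock f A Q hQ k x v
  have hrQ : r ≤ Q := le_of_lt (Nat.mod_lt m (by omega))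
  have hpow : C' ^ r ≤ C' ^ Q := pow_le_pow_right₀ hC'1 hrQ
  have hpow0 : (0:ℝ) < C' ^ Q := pow_pos hC'0 Q
  have hpowr0 : (0:ℝ) < C' ^ r := pow_pos hC'0 r
  constructor
  · -- lower bound
    have h1 : ‖w‖ ≤ C' ^ r * ‖coc f A r y w‖ := by
      have heq : w = icoc f B r y (coc f A r y w) := by
        have := icoc_coc f A B hinv r y
        have h2 : (icoc f B r y ∘L coc f A r y) w = w := by rw [this]; rfl
        exact h2.symm
      calc ‖w‖ = ‖icoc f B r y (coc f A r y w)‖ := by rw [← heq]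
      _ ≤ ‖icoc f B r y‖ * ‖coc f A r y w‖ := ContinuousLinearMap.le_opNorm _ _
      _ ≤ C' ^ r * ‖coc f A r y w‖ :=
          mul_le_mul_of_nonneg_right (icoc_norm_le f B C' hB r y) (norm_nonneg _)
    rw [happ, div_le_iff₀ hpow0]
    calc (1/2)^k * ‖v‖ ≤ ‖w‖ := hm1
    _ ≤ C' ^ r * ‖coc f A r y w‖ := h1
    _ ≤ C' ^ Q * ‖coc f A r y w‖ := mul_le_mul_of_nonneg_right hpow (norm_nonneg _)
    _ = ‖coc f A r y w‖ * C' ^ Q := by ring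
  · -- upper bound
    rw [happ]
    calc ‖coc f A r y w‖ ≤ ‖coc f A r y‖ * ‖w‖ := ContinuousLinearMap.le_opNorm _ _
    _ ≤ C' ^ r * ‖w‖ :=
        mul_le_mul_of_nonneg_right (coc_norm_le f A C' hA r y) (norm_nonneg _)
    _ ≤ C' ^ Q * ((3/2)^k * ‖v‖) := by
        apply mul_le_mul hpow hm2 (norm_nonneg _) (le_of_lt hpow0)
/-- If `f^{q_n} → Id` uniformly in `C¹` (modeled by the cocycle over the
`q_n`-th iterates converging uniformly to the identity) and the generator and
its inverse are uniformly bounded, then all Lyapunov exponents vanish. -/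
theorem lyapunov_zero_of_rigidity
    (f : M → M)
    (A B : M → (EuclideanSpace ℝ (Fin d) →L[ℝ] EuclideanSpace ℝ (Fin d)))
    (hinv : ∀ x, A x ∘L B x = 1 ∧ B x ∘L A x = 1)
    (C : ℝ) (hC : ∀ x, ‖A x‖ ≤ C ∧ ‖B x‖ ≤ C)
    (q : ℕ → ℕ) (hq : Tendsto q atTop atTop)
    (hunif : ∀ ε > 0, ∃ N, ∀ n ≥ N, ∀ x, ‖coc f A (q n) x - 1‖ < ε) :
    ∀ (x : M) (v : EuclideanSpace ℝ (Fin d)), v ≠ 0 →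
      Filter.limsup (fun n : ℕ => (1 / (n : ℝ)) * Real.log ‖coc f A n x v‖)
        atTop = 0 := by
  intro x v hv
  have hvpos : 0 < ‖v‖ := norm_pos_iff.mpr hv
  have hv0 : ‖v‖ ≠ 0 := ne_of_gt hvpos
  set C' : ℝ := max C 1 with hC'def
  have hC'1 : (1:ℝ) ≤ C' := le_max_right _ _
  have hC'0 : (0:ℝ) < C' := lt_of_lt_of_le one_pos hC'1
  have hA : ∀ y, ‖A y‖ ≤ C' := fun y => le_trans (hC y).1 (le_max_left _ _)
  have hB : ∀ y, ‖B y‖ ≤ C' := fun y => le_trans (hC y).2 (le_max_left _ _)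
  have hBA : ∀ y, B y ∘L A y = 1 := fun y => (hinv y).2
  have hlog2 : (0:ℝ) < Real.log 2 := Real.log_pos (by norm_num)
  have hlogC' : (0:ℝ) ≤ Real.log C' := Real.log_nonneg hC'1
  suffices h : Tendsto (fun n : ℕ => (1 / (n : ℝ)) * Real.log ‖coc f A n x v‖)
      atTop (nhds 0) by exact h.limsup_eq
  rw [Metric.tendsto_atTop]
  intro ε hε
  obtain ⟨N, hN⟩ := hunif (1/2) one_half_pos
  obtain ⟨Q0, hQ0⟩ := exists_nat_gt (2 * Real.log 2 / ε)
  obtain ⟨n0, hq1, hq2⟩ :=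
    ((hq.eventually_ge_atTop (max Q0 1)).and (eventually_ge_atTop N)).exists
  set Q := q n0 with hQdef
  have hQ1 : 1 ≤ Q := le_trans (le_max_right _ _) hq1
  have hQpos : (0:ℝ) < (Q:ℝ) := by exact_mod_cast hQ1
  have hblock : ∀ y, ‖coc f A Q y - 1‖ ≤ 1/2 := fun y => (hN n0 hq2 y).le
  have hterm : Real.log 2 / Q < ε / 2 := by
    have hQQ0 : (Q0:ℝ) ≤ Q := by exact_mod_cast le_trans (le_max_left _ _) hq1
    have h2 : 2 * Real.log 2 / ε < (Q:ℝ) := lt_of_lt_of_le hQ0 hQQ0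
    rw [div_lt_iff₀ hQpos]
    rw [div_lt_iff₀ hε] at h2
    nlinarith
  set D : ℝ := Q * Real.log C' + |Real.log ‖v‖| with hD
  have hD0 : 0 ≤ D :=
    add_nonneg (mul_nonneg (Nat.cast_nonneg Q) hlogC') (abs_nonneg _)
  -- pointwise bound for all times m ≥ 1
  have key : ∀ m : ℕ, 1 ≤ m →
      |(1 / (m:ℝ)) * Real.log ‖coc f A m x v‖| ≤ D / m + Real.log 2 / Q := by
    intro m hm
    have hmpos : (0:ℝ) < m := by exact_mod_cast hm
    obtain ⟨hlow, hup⟩ := full_bounds f A B hBA C' hC'1 hA hB Q hQ1 hblock m x v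
    set k := m / Q with hk
    have hXpos : 0 < ‖coc f A m x v‖ := lt_of_lt_of_le (by positivity) hlow
    have hkm : (k:ℝ) * Q ≤ m := by exact_mod_cast Nat.div_mul_le_self m Q
    have hCQ : (C':ℝ) ^ Q ≠ 0 := ne_of_gt (pow_pos hC'0 Q)
    have h32 : ((3/2:ℝ)) ^ k ≠ 0 := by positivity
    have h12 : ((1/2:ℝ)) ^ k ≠ 0 := by positivity
    have hup' : Real.log ‖coc f A m x v‖ ≤
        Q * Real.log C' + (k * Real.log (3/2) + Real.log ‖v‖) := by
      have h1 := (Real.log_le_log_iff hXpos (by positivity)).mpr hup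
      rwa [Real.log_mul hCQ (by positivity), Real.log_mul h32 hv0,
        Real.log_pow, Real.log_pow] at h1
    have hlow' : k * Real.log (1/2) + Real.log ‖v‖ - Q * Real.log C' ≤
        Real.log ‖coc f A m x v‖ := by
      have h1 := (Real.log_le_log_iff (by positivity) hXpos).mpr hlow
      rwa [Real.log_div (by positivity) hCQ, Real.log_mul h12 hv0,
        Real.log_pow, Real.log_pow] at h1
    have hhalf : Real.log ((1:ℝ)/2) = -Real.log 2 := by
      rw [one_div, Real.log_inv]
    have hlog32 : Real.log ((3:ℝ)/2) ≤ Real.log 2 :=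
      (Real.log_le_log_iff (by norm_num) (by norm_num)).mpr (by norm_num)
    have habs : |Real.log ‖coc f A m x v‖| ≤ D + k * Real.log 2 := by
      rw [abs_le]
      constructor
      · rw [hhalf] at hlow'
        have := neg_abs_le (Real.log ‖v‖)
        rw [hD]; linarith
      · have hk0 : (0:ℝ) ≤ k := Nat.cast_nonneg k
        have := mul_le_mul_of_nonneg_left hlog32 hk0
        have := le_abs_self (Real.log ‖v‖)
        rw [hD]; linarith
    have hkQ : (k:ℝ) / m ≤ 1 / Q := by
      rw [div_le_div_iff₀ hmpos hQpos]
      linarith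
    calc |(1 / (m:ℝ)) * Real.log ‖coc f A m x v‖|
        = (1 / (m:ℝ)) * |Real.log ‖coc f A m x v‖| := by
          rw [abs_mul, abs_of_nonneg (by positivity : (0:ℝ) ≤ 1 / (m:ℝ))]
    _ ≤ (1 / (m:ℝ)) * (D + k * Real.log 2) :=
          mul_le_mul_of_nonneg_left habs (by positivity)
    _ = D / m + ((k:ℝ) / m) * Real.log 2 := by ring
    _ ≤ D / m + (1 / (Q:ℝ)) * Real.log 2 :=
          add_le_add (le_refl _) (mul_le_mul_of_nonneg_right hkQ hlog2.le)
    _ = D / m + Real.log 2 / Q := by ring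
  -- choose the threshold
  obtain ⟨N1, hN1⟩ := exists_nat_gt (max (D / (ε/2)) 1)
  refine ⟨N1, fun m hm => ?_⟩
  have hN1' : (1:ℝ) < N1 := lt_of_le_of_lt (le_max_right _ _) hN1
  have hm1 : 1 ≤ m := by
    have : 1 < N1 := by exact_mod_cast hN1'
    omega
  have hmpos : (0:ℝ) < m := by exact_mod_cast hm1
  have hmN1 : (N1:ℝ) ≤ m := by exact_mod_cast hm
  have hDm : D / m < ε / 2 := by
    rw [div_lt_iff₀ hmpos]
    have h1 : D / (ε/2) < (m:ℝ) := lt_of_lt_of_le (lt_of_le_of_lt (le_max_left _ _) hN1) hmN1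
    rw [div_lt_iff₀ (half_pos hε)] at h1
    linarith
  rw [Real.dist_eq, sub_zero]
  calc |(1 / (m:ℝ)) * Real.log ‖coc f A m x v‖| ≤ D / m + Real.log 2 / Q :=
        key m hm1
  _ < ε / 2 + ε / 2 := add_lt_add hDm hterm
  _ = ε := by ring
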